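/- For all n ≥ 6, every permutation π of {1,…,n} with π_{n−1} = n and π_n = 3 (i.e., π ends with the suffix n,3) satisfies ssc(π) = n−3. -/

import Mathlib

/-- The largest letter of a word (`0` for the empty word). -/
def listMax (l : List ℕ) : ℕ := l.foldr max 0

lemma listMax_mem {l : List ℕ} (h : l ≠ []) : listMax l ∈ l := by
  induction l with
  | nil => simp at h
  | cons a t ih =>
    rcases eq_or_ne t [] with rfl | ht
    · simp [listMax]
    · have ht' := ih ht
      have hcons : listMax (a :: t) = max a (listMax t) := rfl
      rcases le_total a (listMax t) with hle | hle
      · rw [hcons, max_eq_right hle]; exact List.mem_cons_of_mem _ ht'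
      · rw [hcons, max_eq_left hle]; exact List.mem_cons_self

/-- The stack-sorting operator `S`: `S` of the empty word is the empty word, and
if `π` is nonempty, writing `π = L·m·R` where `m` is the greatest letter of `π`,
then `S(π) = S(L)·S(R)·m`. -/
def stackSort : List ℕ → List ℕ
  | [] => []
  | x :: xs =>
    stackSort ((x :: xs).take ((x :: xs).idxOf (listMax (x :: xs)))) ++
      stackSort ((x :: xs).drop ((x :: xs).idxOf (listMax (x :: xs)) + 1)) ++
      [listMax (x :: xs)]
termination_by l => l.length
decreasing_by
  · have hm : listMax (x :: xs) ∈ x :: xs := listMax_mem (by simp)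
    have hi : (x :: xs).idxOf (listMax (x :: xs)) < (x :: xs).length :=
      List.idxOf_lt_length_iff.mpr hm
    simp only [List.length_take, List.length_cons] at *
    omega
  · simp only [List.length_drop, List.length_cons]
    omega

lemma le_listMax {l : List ℕ} {a : ℕ} (h : a ∈ l) : a ≤ listMax l := by
  induction l with
  | nil => simp at h
  | cons b t ih =>
    have hcons : listMax (b :: t) = max b (listMax t) := rfl
    rcases List.mem_cons.mp h with rfl | h'
    · rw [hcons]; exact le_max_left _ _
    · rw [hcons]; exact le_trans (ih h') (le_max_right _ _)

lemma listMax_le {l : List ℕ} {m : ℕ} (h : ∀ a ∈ l, a ≤ m) : listMax l ≤ m := by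
  induction l with
  | nil => exact Nat.zero_le m
  | cons b t ih =>
    have hcons : listMax (b :: t) = max b (listMax t) := rfl
    rw [hcons]
    exact max_le (h b (by simp)) (ih fun a ha => h a (by simp [ha]))

lemma listMax_eq {l : List ℕ} {m : ℕ} (hm : m ∈ l) (h : ∀ a ∈ l, a ≤ m) :
    listMax l = m :=
  le_antisymm (listMax_le h) (le_listMax hm)

lemma stackSort_nil : stackSort [] = [] := by rw [stackSort]

lemma stackSort_eq {l : List ℕ} (h : l ≠ []) :
    stackSort l = stackSort (l.take (l.idxOf (listMax l))) ++
      stackSort (l.drop (l.idxOf (listMax l) + 1)) ++ [listMax l] := by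
  match l with
  | x :: xs => rw [stackSort]

lemma stackSort_perm (l : List ℕ) : (stackSort l).Perm l := by
  generalize hn : l.length = n
  induction n using Nat.strong_induction_on generalizing l with
  | _ n ih =>
    match l with
    | [] => rw [stackSort_nil]
    | x :: xs =>
      have hne : (x :: xs) ≠ [] := by simp
      have hmem : listMax (x :: xs) ∈ x :: xs := listMax_mem hne
      set i := (x :: xs).idxOf (listMax (x :: xs)) with hidef
      have hilt : i < (x :: xs).length := List.idxOf_lt_length_iff.mpr hmem
      have hdecomp : (x :: xs).take i ++ listMax (x :: xs) :: (x :: xs).drop (i + 1)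
          = x :: xs := by
        conv_rhs => rw [← List.take_append_drop i (x :: xs)]
        rw [List.drop_eq_getElem_cons hilt, List.getElem_idxOf hilt]
      have h1 : (stackSort ((x :: xs).take i)).Perm ((x :: xs).take i) := by
        refine ih _ ?_ _ rfl
        rw [List.length_take]; omega
      have h2 : (stackSort ((x :: xs).drop (i + 1))).Perm ((x :: xs).drop (i + 1)) := by
        refine ih _ ?_ _ rfl
        rw [List.length_drop]; omega
      rw [stackSort_eq hne, ← hidef]
      have p1 : (stackSort ((x :: xs).take i) ++ stackSort ((x :: xs).drop (i + 1))
          ++ [listMax (x :: xs)]).Perm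
          (((x :: xs).take i ++ (x :: xs).drop (i + 1)) ++ [listMax (x :: xs)]) :=
        (h1.append h2).append_right _
      have p2 : (((x :: xs).take i ++ (x :: xs).drop (i + 1))
          ++ [listMax (x :: xs)]).Perm
          ((x :: xs).take i ++ listMax (x :: xs) :: (x :: xs).drop (i + 1)) :=
        (List.perm_append_singleton _ _).trans List.perm_middle.symm
      rw [hdecomp] at p2
      exact p1.trans p2

lemma stackSort_singleton (a : ℕ) : stackSort [a] = [a] := by
  rw [stackSort_eq (by simp)]
  have h1 : listMax [a] = a := listMax_eq (by simp) (by simp)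
  rw [h1]
  simp [stackSort_nil]

lemma stackSort_append_max {x : List ℕ} {m : ℕ} (h : ∀ a ∈ x, a < m) :
    stackSort (x ++ [m]) = stackSort x ++ [m] := by
  rcases eq_or_ne x [] with rfl | hx
  · simp [stackSort_singleton, stackSort_nil]
  · have hmax : listMax (x ++ [m]) = m := by
      refine listMax_eq (by simp) ?_
      intro a ha
      rcases List.mem_append.mp ha with h' | h'
      · exact le_of_lt (h a h')
      · simp at h'; omega
    have hnm : m ∉ x := fun hc => lt_irrefl m (h m hc)
    have hidx : (x ++ [m]).idxOf m = x.length := by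
      rw [List.idxOf_append_of_notMem hnm, List.idxOf_cons_self]
      omega
    rw [stackSort_eq (by simp), hmax, hidx, List.take_left]
    have hlen : x.length + 1 = (x ++ [m]).length := by simp
    rw [hlen, List.drop_length, stackSort_nil, List.append_nil]

lemma stackSort_iterate_append_max {m : ℕ} (k : ℕ) :
    ∀ {x : List ℕ}, (∀ a ∈ x, a < m) →
      stackSort^[k] (x ++ [m]) = stackSort^[k] x ++ [m] := by
  induction k with
  | zero => intro x _; simp
  | succ k ih =>
    intro x h
    rw [Function.iterate_succ_apply, Function.iterate_succ_apply,
      stackSort_append_max h]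
    exact ih fun a ha => h a ((stackSort_perm x).mem_iff.mp ha)

lemma stackSort_range' (n : ℕ) : stackSort (List.range' 1 n) = List.range' 1 n := by
  induction n with
  | zero => simp [stackSort_nil]
  | succ n ih =>
    have hconcat : List.range' 1 (n + 1) = List.range' 1 n ++ [n + 1] := by
      rw [List.range'_concat]; norm_num [Nat.add_comm]
    rw [hconcat, stackSort_append_max, ih]
    intro a ha
    rw [List.mem_range'_1] at ha
    omega

lemma stackSort_concat_max_three {β : List ℕ} {m : ℕ} (h3 : 3 < m)
    (hβ : ∀ a ∈ β, a < m) :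
    stackSort (β ++ [m, 3]) = stackSort β ++ [3, m] := by
  have hmax : listMax (β ++ [m, 3]) = m := by
    refine listMax_eq (by simp) ?_
    intro a ha
    rcases List.mem_append.mp ha with h' | h'
    · exact le_of_lt (hβ a h')
    · simp at h'; omega
  have hnm : m ∉ β := fun hc => lt_irrefl m (hβ m hc)
  have hidx : (β ++ [m, 3]).idxOf m = β.length := by
    rw [List.idxOf_append_of_notMem hnm, List.idxOf_cons_self]
    omega
  have hsplit : β ++ [m, 3] = (β ++ [m]) ++ [3] := by simp
  have hdrop : (β ++ [m, 3]).drop (β.length + 1) = [3] := by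
    rw [hsplit]; exact List.drop_left' (by simp)
  rw [stackSort_eq (by simp), hmax, hidx, List.take_left, hdrop,
    stackSort_singleton]
  simp

lemma range'_concat_1 (m : ℕ) : List.range' 1 (m + 1) = List.range' 1 m ++ [m + 1] := by
  rw [List.range'_concat]; norm_num [Nat.add_comm]

lemma key : ∀ m, 4 ≤ m → ∀ β : List ℕ, (β ++ [m, 3]).Perm (List.range' 1 m) →
    stackSort^[m - 3] (β ++ [m, 3]) = List.range' 1 m ∧
    stackSort^[m - 4] (β ++ [m, 3]) ≠ List.range' 1 m := by
  intro m hm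
  induction m, hm using Nat.le_induction with
  | base =>
    intro β hperm
    -- β ++ [3] is a permutation of [1,2,3]
    have hswap : (β ++ [4, 3]).Perm ((β ++ [3]) ++ [4]) := by
      have : ([4, 3] : List ℕ).Perm [3, 4] := List.Perm.swap 3 4 []
      simpa using List.Perm.append_left β this
    have hperm3 : (β ++ [3]).Perm (List.range' 1 3) := by
      have h4 : ((β ++ [3]) ++ [4]).Perm (List.range' 1 3 ++ [4]) := by
        refine (hswap.symm.trans hperm).trans ?_
        rw [show (4 : ℕ) = 3 + 1 from rfl, range'_concat_1]
      exact (List.perm_append_right_iff [4]).mp h4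
    have hpermβ : β.Perm [1, 2] := by
      have : (β ++ [3]).Perm ([1, 2] ++ [3]) := by
        refine hperm3.trans ?_
        decide
      exact (List.perm_append_right_iff [3]).mp this
    have hβlt : ∀ a ∈ β, a < 4 := by
      intro a ha
      have := hpermβ.mem_iff.mp ha
      simp at this; omega
    have hβne : β ≠ [] := by
      intro hc; rw [hc] at hpermβ; exact absurd hpermβ.length_eq (by simp)
    have hmaxβ : listMax β = 2 := by
      refine listMax_eq ?_ ?_
      · exact hpermβ.mem_iff.mpr (by simp)
      · intro a ha
        have := hpermβ.mem_iff.mp ha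
        simp at this; omega
    have hSβ : stackSort β = [1, 2] := by
      have heq := stackSort_eq hβne
      rw [hmaxβ] at heq
      set γ := stackSort (β.take (β.idxOf 2)) ++ stackSort (β.drop (β.idxOf 2 + 1))
        with hγ
      have heq2 : stackSort β = γ ++ [2] := heq
      have hγperm : (γ ++ [2]).Perm ([1] ++ [2]) := by
        rw [← heq2]
        exact (stackSort_perm β).trans (hpermβ.trans (by decide))
      have : γ = [1] := List.perm_singleton.mp ((List.perm_append_right_iff [2]).mp hγperm)
      rw [heq2, this]; rfl
    constructor
    · show stackSort^[1] (β ++ [4, 3]) = List.range' 1 4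
      rw [Function.iterate_one, stackSort_concat_max_three (by norm_num) hβlt, hSβ]
      decide
    · show stackSort^[0] (β ++ [4, 3]) ≠ List.range' 1 4
      rw [Function.iterate_zero_apply]
      intro hc
      have hlen : β.length = 2 := hpermβ.length_eq
      have := congrArg (List.drop 2) hc
      rw [← hlen, List.drop_left' rfl, hlen] at this
      simp [List.range'] at this
  | succ m hm ih =>
    intro β hperm
    have h3m : (3 : ℕ) < m + 1 := by omega
    have hswap : (β ++ [m + 1, 3]).Perm ((β ++ [3]) ++ [m + 1]) := by
      have : ([m + 1, 3] : List ℕ).Perm [3, m + 1] := List.Perm.swap 3 (m + 1) []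
      simpa using List.Perm.append_left β this
    have hperm3 : (β ++ [3]).Perm (List.range' 1 m) := by
      have h4 : ((β ++ [3]) ++ [m + 1]).Perm (List.range' 1 m ++ [m + 1]) := by
        refine (hswap.symm.trans hperm).trans ?_
        rw [range'_concat_1]
      exact (List.perm_append_right_iff [m + 1]).mp h4
    have hβ3lt : ∀ a ∈ β ++ [3], a < m + 1 := by
      intro a ha
      have := hperm3.mem_iff.mp ha
      rw [List.mem_range'_1] at this; omega
    have hβlt : ∀ a ∈ β, a < m + 1 := fun a ha => hβ3lt a (List.mem_append_left _ ha)
    have hmβ : m ∈ β := by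
      have hmem : m ∈ β ++ [3] := hperm3.mem_iff.mpr (by rw [List.mem_range'_1]; omega)
      rcases List.mem_append.mp hmem with h' | h'
      · exact h'
      · simp at h'; omega
    have hβne : β ≠ [] := fun hc => by simp [hc] at hmβ
    have hmaxβ : listMax β = m := by
      refine listMax_eq hmβ ?_
      intro a ha
      have := hβlt a ha; omega
    obtain ⟨γ, hSβ⟩ : ∃ γ, stackSort β = γ ++ [m] := by
      refine ⟨stackSort (β.take (β.idxOf m)) ++ stackSort (β.drop (β.idxOf m + 1)), ?_⟩
      have heq := stackSort_eq hβne
      rw [hmaxβ] at heq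
      rw [heq]
    have hpermγ : (γ ++ [m, 3]).Perm (List.range' 1 m) := by
      have h1 : (γ ++ [m, 3]) = (γ ++ [m]) ++ [3] := by simp
      rw [h1, ← hSβ]
      exact (((stackSort_perm β).append_right [3]).trans hperm3)
    have hγlt : ∀ a ∈ γ ++ [m, 3], a < m + 1 := by
      intro a ha
      have := hpermγ.mem_iff.mp ha
      rw [List.mem_range'_1] at this; omega
    have hSv : stackSort (β ++ [m + 1, 3]) = (γ ++ [m, 3]) ++ [m + 1] := by
      rw [stackSort_concat_max_three h3m hβlt, hSβ]; simp
    obtain ⟨hup, hlo⟩ := ih γ hpermγ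
    constructor
    · have harith : m + 1 - 3 = (m - 3) + 1 := by omega
      rw [harith, Function.iterate_succ_apply, hSv,
        stackSort_iterate_append_max _ hγlt, hup, ← range'_concat_1]
    · have harith : m + 1 - 4 = (m - 4) + 1 := by omega
      rw [harith, Function.iterate_succ_apply, hSv,
        stackSort_iterate_append_max _ hγlt, range'_concat_1]
      intro hc
      exact hlo (List.append_cancel_right hc)

/-- `π` is a permutation of `{1, …, n}`, viewed as a word containing each of
`1, …, n` exactly once. -/
def IsPermWord (n : ℕ) (π : List ℕ) : Prop := π.Perm (List.range' 1 n)

/-- The stack-sorting complexity of `π`: the least `k ≥ 0` such that `S^k(π)`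
is the identity word `1, 2, …, n` (where `n` is the length of `π`). -/
noncomputable def ssc (π : List ℕ) : ℕ :=
  sInf {k : ℕ | stackSort^[k] π = List.range' 1 π.length}

/-- For all `n ≥ 6`, every permutation `π` of `{1,…,n}` ending with the suffix
`n, 3` satisfies `ssc(π) = n−3`. -/
theorem ssc_of_suffix_n_three (n : ℕ) (hn : 6 ≤ n) (π : List ℕ) (hπ : IsPermWord n π)
    (h : ∃ w : List ℕ, π = w ++ [n, 3]) : ssc π = n - 3 := by
  obtain ⟨w, rfl⟩ := h
  have hπ' : (w ++ [n, 3]).Perm (List.range' 1 n) := hπ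
  obtain ⟨hup, hlo⟩ := key n (by omega) w hπ'
  have hlen : (w ++ [n, 3]).length = n := by
    rw [hπ'.length_eq, List.length_range']
  rw [ssc, hlen]
  refine le_antisymm (Nat.sInf_le hup) (le_csInf ⟨n - 3, hup⟩ ?_)
  intro k hk
  by_contra hlt
  push_neg at hlt
  have hk4 : k ≤ n - 4 := by omega
  have : stackSort^[n - 4] (w ++ [n, 3]) = List.range' 1 n := by
    have harith : (n - 4 - k) + k = n - 4 := by omega
    rw [← harith, Function.iterate_add_apply, hk,
      Function.iterate_fixed (stackSort_range' n)]
  exact hlo this
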